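/- Let α(x,y) = Σ_{i=1}^n x_i² and β(x,y) = Σ_{i=1}^k x_i² + Σ_{i=k+1}^n y_i² on ℂⁿ = ℝⁿ_x ⊕ iℝⁿ_y, with 0 ≤ k ≤ n. Then the function αβ is weakly plurisubharmonic on ℂⁿ, i.e., the complex Hessian (∂²(αβ)/∂z_i∂z̄_j) is positive semidefinite everywhere. -/

import Mathlib

noncomputable section

/-- ℂⁿ as a real inner product space. -/
abbrev Cn (n : ℕ) := EuclideanSpace ℂ (Fin n)

/-- α(x,y) = Σ xᵢ², the squared distance to L₁ = iℝⁿ. -/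
def alph (n : ℕ) (z : Cn n) : ℝ := ∑ i, (z i).re ^ 2

/-- β(x,y) = Σ_{i≤k} xᵢ² + Σ_{i>k} yᵢ² (0-based: i < k resp. k ≤ i). -/
def bet (n k : ℕ) (z : Cn n) : ℝ :=
  ∑ i : Fin n, if (i : ℕ) < k then (z i).re ^ 2 else (z i).im ^ 2

/-- The Levi quadratic form of a real function `f` at `z` on the (real) vector `v`:
`dd^c f(v, iv) = Hess f(v,v) + Hess f(iv,iv)`.  Weak plurisubharmonicity of `f` at `z`
(positive semidefiniteness of the complex Hessian `(∂²f/∂zᵢ∂z̄ⱼ)`) is equivalent to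
`0 ≤ levi n f z v` for all `v`. -/
def levi (n : ℕ) (f : Cn n → ℝ) (z v : Cn n) : ℝ :=
  iteratedFDeriv ℝ 2 f z ![v, v] + iteratedFDeriv ℝ 2 f z ![Complex.I • v, Complex.I • v]

/-- The symmetric bilinear form `dd^c f(·, i·)(v,w) = Hess f(v,w) + Hess f(iv,iw)`,
whose matrix in the standard real basis of ℝ²ⁿ is `M₀`. -/
def leviB (n : ℕ) (f : Cn n → ℝ) (z v w : Cn n) : ℝ :=
  iteratedFDeriv ℝ 2 f z ![v, w] + iteratedFDeriv ℝ 2 f z ![Complex.I • v, Complex.I • w]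

/-! ### Auxiliary machinery -/

/-- The real-linear functional `z ↦ (z i).re`. -/
def ri (n : ℕ) (i : Fin n) : Cn n →L[ℝ] ℝ :=
  Complex.reCLM.comp ((EuclideanSpace.proj i).restrictScalars ℝ)

/-- The real-linear functional `z ↦ (z i).im`. -/
def si (n : ℕ) (i : Fin n) : Cn n →L[ℝ] ℝ :=
  Complex.imCLM.comp ((EuclideanSpace.proj i).restrictScalars ℝ)

/-- The functionals whose squares sum to `bet`. -/
def di (n k : ℕ) (i : Fin n) : Cn n →L[ℝ] ℝ :=
  if (i : ℕ) < k then ri n i else si n i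

lemma sq_sum_hasFDerivAt (n : ℕ) (φ : Fin n → (Cn n →L[ℝ] ℝ)) (z : Cn n) :
    HasFDerivAt (fun w => ∑ i, (φ i w) ^ 2) (∑ i, (2 * φ i z) • φ i) z := by
  have h := HasFDerivAt.fun_sum (u := Finset.univ)
    (fun i _ => ((φ i).hasFDerivAt (x := z)).mul ((φ i).hasFDerivAt (x := z)))
  convert h using 1
  any_goals rfl
  · funext w; simp [sq]
  · rw [Finset.sum_congr rfl]
    intro i _
    ext v
    simp [two_mul, add_smul, mul_comm]

/-- The (constant) second derivative of `alph`, as a continuous linear map. -/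
def Ta (n : ℕ) : Cn n →L[ℝ] Cn n →L[ℝ] ℝ :=
  ∑ i, ((2:ℝ) • ri n i).smulRight (ri n i)

/-- The (constant) second derivative of `bet`, as a continuous linear map. -/
def Tb (n k : ℕ) : Cn n →L[ℝ] Cn n →L[ℝ] ℝ :=
  ∑ i, ((2:ℝ) • di n k i).smulRight (di n k i)

lemma hAlph (n : ℕ) (z : Cn n) : HasFDerivAt (alph n) (Ta n z) z := by
  have h := sq_sum_hasFDerivAt n (ri n) z
  convert h using 1
  · rfl
  ext v
  simp [Ta, ContinuousLinearMap.sum_apply, mul_comm, mul_assoc]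

lemma hBet (n k : ℕ) (z : Cn n) : HasFDerivAt (bet n k) (Tb n k z) z := by
  have h := sq_sum_hasFDerivAt n (di n k) z
  convert h using 1
  · funext w
    unfold bet
    refine Finset.sum_congr rfl (fun i _ => ?_)
    unfold di
    split <;> rfl
  · ext v
    simp [Tb, ContinuousLinearMap.sum_apply, mul_comm, mul_assoc]

lemma second_deriv (n k : ℕ) (z v w : Cn n) :
    iteratedFDeriv ℝ 2 (fun w => alph n w * bet n k w) z ![v, w] =
      alph n z * Tb n k v w + Ta n z v * Tb n k z w
        + bet n k z * Ta n v w + Tb n k z v * Ta n z w := by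
  have hf : ∀ y : Cn n, HasFDerivAt (fun w => alph n w * bet n k w)
      (alph n y • Tb n k y + bet n k y • Ta n y) y :=
    fun y => (hAlph n y).mul (hBet n k y)
  have hff : fderiv ℝ (fun w => alph n w * bet n k w) =
      fun y => alph n y • Tb n k y + bet n k y • Ta n y :=
    funext fun y => (hf y).fderiv
  have h2 : HasFDerivAt (fun y => alph n y • Tb n k y + bet n k y • Ta n y)
      ((alph n z • Tb n k + (Ta n z).smulRight (Tb n k z))
        + (bet n k z • Ta n + (Tb n k z).smulRight (Ta n z))) z :=
    ((hAlph n z).smul ((Tb n k).hasFDerivAt)).add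
      ((hBet n k z).smul ((Ta n).hasFDerivAt))
  rw [iteratedFDeriv_two_apply, hff, h2.fderiv]
  simp [ContinuousLinearMap.add_apply, ContinuousLinearMap.smul_apply,
    ContinuousLinearMap.smulRight_apply, smul_eq_mul]
  ring

lemma di_apply (n k : ℕ) (i : Fin n) (u : Cn n) :
    di n k i u = if (i : ℕ) < k then (u i).re else (u i).im := by
  unfold di; split <;> rfl

lemma Ta_eval (n : ℕ) (u w : Cn n) :
    Ta n u w = ∑ i, 2 * ((u i).re * (w i).re) := by
  simp only [Ta, ContinuousLinearMap.sum_apply, ContinuousLinearMap.smulRight_apply,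
    ContinuousLinearMap.smul_apply, smul_eq_mul]
  refine Finset.sum_congr rfl (fun i _ => ?_)
  show (2 * ri n i u) * ri n i w = _
  ring_nf
  rfl

lemma Tb_eval (n k : ℕ) (u w : Cn n) :
    Tb n k u w = ∑ i : Fin n, if (i : ℕ) < k then 2 * ((u i).re * (w i).re)
      else 2 * ((u i).im * (w i).im) := by
  simp only [Tb, ContinuousLinearMap.sum_apply, ContinuousLinearMap.smulRight_apply,
    ContinuousLinearMap.smul_apply, smul_eq_mul]
  refine Finset.sum_congr rfl (fun i _ => ?_)
  show (2 * di n k i u) * di n k i w = _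
  rw [di_apply, di_apply]
  split <;> ring

lemma smul_I_re (n : ℕ) (v : Cn n) (i : Fin n) :
    ((Complex.I • v) i).re = -(v i).im := by
  simp [PiLp.smul_apply, smul_eq_mul, Complex.mul_re]

lemma smul_I_im (n : ℕ) (v : Cn n) (i : Fin n) :
    ((Complex.I • v) i).im = (v i).re := by
  simp [PiLp.smul_apply, smul_eq_mul, Complex.mul_im]

lemma levi_eval (n k : ℕ) (z v : Cn n) :
    levi n (fun w => alph n w * bet n k w) z v =
      2 * (alph n z + bet n k z) * (∑ i, ((v i).re ^ 2 + (v i).im ^ 2))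
      + 8 * ((∑ i, (z i).re * (v i).re) *
              (∑ i : Fin n, if (i : ℕ) < k then (z i).re * (v i).re else (z i).im * (v i).im)
           - (∑ i, (z i).re * (v i).im) *
              (∑ i : Fin n, if (i : ℕ) < k then -((z i).re * (v i).im) else (z i).im * (v i).re)) := by
  rw [levi, second_deriv, second_deriv]
  simp only [Ta_eval, Tb_eval, smul_I_re, smul_I_im, mul_neg, neg_mul, neg_neg,
    Finset.sum_neg_distrib]
  have hA : (∑ i, 2 * ((z i).re * (v i).re)) = 2 * ∑ i, (z i).re * (v i).re :=
    (Finset.mul_sum _ _ _).symm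
  have hB : (∑ i, 2 * ((z i).re * (v i).im)) = 2 * ∑ i, (z i).re * (v i).im :=
    (Finset.mul_sum _ _ _).symm
  have hC : (∑ i : Fin n, if (i : ℕ) < k then 2 * ((z i).re * (v i).re)
        else 2 * ((z i).im * (v i).im))
      = 2 * ∑ i : Fin n, if (i : ℕ) < k then (z i).re * (v i).re else (z i).im * (v i).im := by
    rw [Finset.mul_sum]
    exact Finset.sum_congr rfl (fun i _ => by split <;> ring)
  have hD : (∑ i : Fin n, if (i : ℕ) < k then -(2 * ((z i).re * (v i).im))
        else 2 * ((z i).im * (v i).re))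
      = 2 * ∑ i : Fin n, if (i : ℕ) < k then -((z i).re * (v i).im) else (z i).im * (v i).re := by
    rw [Finset.mul_sum]
    exact Finset.sum_congr rfl (fun i _ => by split <;> ring)
  have hsa : (∑ i, 2 * ((v i).re * (v i).re)) + (∑ i, 2 * ((v i).im * (v i).im))
      = 2 * ∑ i, ((v i).re ^ 2 + (v i).im ^ 2) := by
    rw [Finset.mul_sum, ← Finset.sum_add_distrib]
    exact Finset.sum_congr rfl (fun i _ => by ring)
  have hsb : (∑ i : Fin n, if (i : ℕ) < k then 2 * ((v i).re * (v i).re)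
        else 2 * ((v i).im * (v i).im))
      + (∑ i : Fin n, if (i : ℕ) < k then 2 * ((v i).im * (v i).im)
        else 2 * ((v i).re * (v i).re))
      = 2 * ∑ i, ((v i).re ^ 2 + (v i).im ^ 2) := by
    rw [Finset.mul_sum, ← Finset.sum_add_distrib]
    exact Finset.sum_congr rfl (fun i _ => by split <;> ring)
  rw [hA, hB, hC, hD]
  linear_combination alph n z * hsb + bet n k z * hsa

lemma key (n k : ℕ) (z v : Cn n) :
    0 ≤ 2 * (alph n z + bet n k z) * (∑ i, ((v i).re ^ 2 + (v i).im ^ 2))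
      + 8 * ((∑ i, (z i).re * (v i).re) *
              (∑ i : Fin n, if (i : ℕ) < k then (z i).re * (v i).re else (z i).im * (v i).im)
           - (∑ i, (z i).re * (v i).im) *
              (∑ i : Fin n, if (i : ℕ) < k then -((z i).re * (v i).im) else (z i).im * (v i).re)) := by
  set A := ∑ i, (z i).re * (v i).re with hA
  set B := ∑ i, (z i).re * (v i).im with hB
  set C := ∑ i : Fin n, if (i : ℕ) < k then (z i).re * (v i).re else (z i).im * (v i).im with hC
  set D := ∑ i : Fin n, if (i : ℕ) < k then -((z i).re * (v i).im) else (z i).im * (v i).re with hD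
  set NV := ∑ i, ((v i).re ^ 2 + (v i).im ^ 2) with hNV
  have hNV0 : 0 ≤ NV := Finset.sum_nonneg (fun i _ => by positivity)
  set S : ℂ := ∑ i : Fin n, if (i : ℕ) < k then 0 else (z i * v i) with hS
  have hP : A - C = S.re := by
    rw [hS, Complex.re_sum, hA, hC, ← Finset.sum_sub_distrib]
    refine Finset.sum_congr rfl (fun i _ => ?_)
    split <;> simp [Complex.mul_re]
  have hQ : B + D = S.im := by
    rw [hS, Complex.im_sum, hB, hD, ← Finset.sum_add_distrib]
    refine Finset.sum_congr rfl (fun i _ => ?_)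
    split <;> simp [Complex.mul_im]
  have h1 : S.re ^ 2 + S.im ^ 2 = ‖S‖ ^ 2 := by
    rw [Complex.sq_norm, Complex.normSq_apply]; ring
  have h2 : ‖S‖ ≤
      ∑ i : Fin n, (if (i : ℕ) < k then 0 else ‖z i‖) * ‖v i‖ := by
    refine le_trans (norm_sum_le _ _) (le_of_eq ?_)
    refine Finset.sum_congr rfl (fun i _ => ?_)
    split <;> simp [map_mul]
  have h3 : (∑ i : Fin n, (if (i : ℕ) < k then 0 else ‖z i‖) * ‖v i‖) ^ 2
      ≤ (∑ i : Fin n, (if (i : ℕ) < k then 0 else ‖z i‖) ^ 2)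
        * (∑ i : Fin n, ‖v i‖ ^ 2) :=
    Finset.sum_mul_sq_le_sq_mul_sq _ _ _
  have h4 : (∑ i : Fin n, (if (i : ℕ) < k then 0 else ‖z i‖) ^ 2)
      ≤ alph n z + bet n k z := by
    rw [alph, bet, ← Finset.sum_add_distrib]
    refine Finset.sum_le_sum (fun i _ => ?_)
    split
    · nlinarith [sq_nonneg (z i).re]
    · rw [Complex.sq_norm, Complex.normSq_apply]
      nlinarith [sq_nonneg (z i).re, sq_nonneg (z i).im]
  have h5 : (∑ i : Fin n, ‖v i‖ ^ 2) = NV := by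
    rw [hNV]
    refine Finset.sum_congr rfl (fun i _ => ?_)
    rw [Complex.sq_norm, Complex.normSq_apply]; ring
  have hCS : (A - C) ^ 2 + (B + D) ^ 2 ≤ (alph n z + bet n k z) * NV := by
    rw [hP, hQ, h1]
    calc ‖S‖ ^ 2
        ≤ (∑ i : Fin n, (if (i : ℕ) < k then 0 else ‖z i‖) * ‖v i‖) ^ 2 :=
          pow_le_pow_left₀ (norm_nonneg _) h2 2
      _ ≤ (∑ i : Fin n, (if (i : ℕ) < k then 0 else ‖z i‖) ^ 2)
            * (∑ i : Fin n, ‖v i‖ ^ 2) := h3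
      _ ≤ (alph n z + bet n k z) * NV := by
          rw [h5]; exact mul_le_mul_of_nonneg_right h4 hNV0
  nlinarith [hCS, sq_nonneg (A + C), sq_nonneg (B - D)]

/-- the function αβ is weakly plurisubharmonic on all of ℂⁿ. -/
theorem product_weakly_psh (n k : ℕ) (hk : k ≤ n) (z v : Cn n) :
    0 ≤ levi n (fun w => alph n w * bet n k w) z v := by
  rw [levi_eval]
  exact key n k z v
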